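/- For n ≥ 1, let f_n*(x₁,x₂) = (1/n)cos(n² x₁) + x₂ and f(x₁,x₂) = x₂. If x₁ ~ U[-π,π], then: (a) E[∇f_n*(x) ∇f_n*(x)^T] = diag(n²/2, 1); (b) the AGOP of f is diag(0,1); (c) the cosine similarity Tr(A_f^T A_{f_n*})/(‖A_f‖_F ‖A_{f_n*}‖_F) = 1/√(n⁴/4 + 1) → 0 as n → ∞; while (d) |f(x) - f_n*(x)| ≤ 1/n for all x, so f converges uniformly to f_n* in uniform distance as n → ∞. -/

import Mathlib

open MeasureTheory Matrix Real Filter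

/-- The Frobenius norm of a real matrix. -/
noncomputable def frobNorm {m n : Type*} [Fintype m] [Fintype n] (A : Matrix m n ℝ) : ℝ :=
  Real.sqrt (∑ i, ∑ j, (A i j) ^ 2)

lemma aux_sinsq (n : ℕ) (hn : 1 ≤ n) :
    ∫ t in (-π)..π, Real.sin ((n:ℝ)^2 * t)^2 = π := by
  have hc : ((n:ℝ)^2) ≠ 0 := by positivity
  rw [intervalIntegral.integral_comp_mul_left (fun u => Real.sin u ^ 2) hc, integral_sin_sq]
  have hs : Real.sin ((n:ℝ)^2 * π) = 0 := by
    have := Real.sin_nat_mul_pi (n^2)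
    push_cast at this ⊢
    linarith [this]
  have hs' : Real.sin ((n:ℝ)^2 * -π) = 0 := by
    rw [mul_neg, Real.sin_neg, hs, neg_zero]
  rw [hs, hs', smul_eq_mul]
  field_simp
  ring

lemma aux_sin (n : ℕ) (hn : 1 ≤ n) :
    ∫ t in (-π)..π, Real.sin ((n:ℝ)^2 * t) = 0 := by
  have hc : ((n:ℝ)^2) ≠ 0 := by positivity
  rw [intervalIntegral.integral_comp_mul_left (fun u => Real.sin u) hc, integral_sin]
  rw [mul_neg, Real.cos_neg]
  simp

lemma mu_integral (g : ℝ → ℝ) :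
    ∫ t, g t ∂((ENNReal.ofReal (2*π))⁻¹ • volume.restrict (Set.Icc (-π) π)) =
      (2*π)⁻¹ * ∫ t in (-π)..π, g t := by
  rw [MeasureTheory.integral_smul_measure, ENNReal.toReal_inv,
    ENNReal.toReal_ofReal (by positivity), smul_eq_mul,
    MeasureTheory.integral_Icc_eq_integral_Ioc,
    ← intervalIntegral.integral_of_le (by linarith [pi_pos] : -π ≤ π)]

lemma mu_int_00 (n : ℕ) (hn : 1 ≤ n) :
    ∫ t, ((-(n:ℝ) * Real.sin ((n:ℝ)^2 * t)) * (-(n:ℝ) * Real.sin ((n:ℝ)^2 * t)))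
      ∂((ENNReal.ofReal (2*π))⁻¹ • volume.restrict (Set.Icc (-π) π)) = (n:ℝ)^2/2 := by
  rw [mu_integral]
  have : ∀ t : ℝ, (-(n:ℝ) * Real.sin ((n:ℝ)^2 * t)) * (-(n:ℝ) * Real.sin ((n:ℝ)^2 * t))
      = (n:ℝ)^2 * Real.sin ((n:ℝ)^2 * t)^2 := by intro t; ring
  simp_rw [this]
  rw [intervalIntegral.integral_const_mul, aux_sinsq n hn]
  have hπ := pi_ne_zero
  field_simp

lemma mu_int_01 (n : ℕ) (hn : 1 ≤ n) :
    ∫ t, (-(n:ℝ) * Real.sin ((n:ℝ)^2 * t))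
      ∂((ENNReal.ofReal (2*π))⁻¹ • volume.restrict (Set.Icc (-π) π)) = 0 := by
  rw [mu_integral, intervalIntegral.integral_const_mul, aux_sin n hn]
  ring

lemma mu_int_11 :
    ∫ t, (1:ℝ) ∂((ENNReal.ofReal (2*π))⁻¹ • volume.restrict (Set.Icc (-π) π)) = 1 := by
  rw [mu_integral, intervalIntegral.integral_const]
  field_simp
  ring

/-- for `f_n*(x₁,x₂) = (1/n)cos(n²x₁) + x₂` and `f(x₁,x₂) = x₂`, with
`x₁ ~ U[-π,π]`: (a) the AGOP of `f_n*` is `diag(n²/2, 1)` (with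
`∇f_n*(x) = (-n sin(n²x₁), 1)`); (b) the AGOP of `f` is `diag(0,1)`; (c) their cosine
similarity is `1/√(n⁴/4 + 1)`, which tends to `0` as `n → ∞`; while (d) `|f - f_n*| ≤ 1/n`
uniformly, so `f` approximates `f_n*` arbitrarily well. -/
theorem agop_alignment_not_necessary (n : ℕ) (hn : 1 ≤ n) :
    let fn : EuclideanSpace ℝ (Fin 2) → ℝ :=
      fun x => (1 / (n : ℝ)) * Real.cos ((n : ℝ) ^ 2 * x 0) + x 1
    let f : EuclideanSpace ℝ (Fin 2) → ℝ := fun x => x 1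
    let gvec : ℝ → (Fin 2 → ℝ) := fun t => ![-(n : ℝ) * Real.sin ((n : ℝ) ^ 2 * t), 1]
    let μ : Measure ℝ :=
      (ENNReal.ofReal (2 * Real.pi))⁻¹ • volume.restrict (Set.Icc (-Real.pi) Real.pi)
    let Afn : Matrix (Fin 2) (Fin 2) ℝ := !![(n : ℝ) ^ 2 / 2, 0; 0, 1]
    let Af : Matrix (Fin 2) (Fin 2) ℝ := !![0, 0; 0, 1]
    -- the gradient of `f_n*`
    (∀ x : EuclideanSpace ℝ (Fin 2),
      HasGradientAt fn ((EuclideanSpace.equiv (Fin 2) ℝ).symm (gvec (x 0))) x) ∧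
    -- (a) AGOP of `f_n*`
    (∀ i j : Fin 2, ∫ t, gvec t i * gvec t j ∂μ = Afn i j) ∧
    -- (b) AGOP of `f`
    vecMulVec ![(0 : ℝ), 1] ![(0 : ℝ), 1] = Af ∧
    -- (c) cosine similarity and its limit
    Matrix.trace (Afᵀ * Afn) / (frobNorm Af * frobNorm Afn) =
      1 / Real.sqrt ((n : ℝ) ^ 4 / 4 + 1) ∧
    Tendsto (fun m : ℕ => 1 / Real.sqrt ((m : ℝ) ^ 4 / 4 + 1)) atTop (nhds 0) ∧
    -- (d) uniform closeness
    (∀ x : EuclideanSpace ℝ (Fin 2), |f x - fn x| ≤ 1 / (n : ℝ)) := by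
  intro fn f gvec μ Afn Af
  have hn0 : (n:ℝ) ≠ 0 := by positivity
  refine ⟨?_, ?_, ?_, ?_, ?_, ?_⟩
  · -- gradient
    intro x
    rw [hasGradientAt_iff_hasFDerivAt]
    have h0 : HasFDerivAt (fun y : EuclideanSpace ℝ (Fin 2) => y 0)
        (EuclideanSpace.proj (0 : Fin 2) : EuclideanSpace ℝ (Fin 2) →L[ℝ] ℝ) x := by
      exact (EuclideanSpace.proj (0 : Fin 2) : EuclideanSpace ℝ (Fin 2) →L[ℝ] ℝ).hasFDerivAt
    have h1 : HasFDerivAt (fun y : EuclideanSpace ℝ (Fin 2) => y 1)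
        (EuclideanSpace.proj (1 : Fin 2) : EuclideanSpace ℝ (Fin 2) →L[ℝ] ℝ) x := by
      exact (EuclideanSpace.proj (1 : Fin 2) : EuclideanSpace ℝ (Fin 2) →L[ℝ] ℝ).hasFDerivAt
    have hcos : HasDerivAt (fun t : ℝ => (1 / (n : ℝ)) * Real.cos ((n : ℝ) ^ 2 * t))
        (-(n : ℝ) * Real.sin ((n : ℝ) ^ 2 * x 0)) (x 0) := by
      have hlin : HasDerivAt (fun t : ℝ => (n : ℝ) ^ 2 * t) ((n : ℝ) ^ 2) (x 0) := by
        simpa using (hasDerivAt_id (x 0)).const_mul ((n : ℝ) ^ 2)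
      have := ((Real.hasDerivAt_cos ((n : ℝ) ^ 2 * x 0)).comp (x 0) hlin).const_mul (1 / (n : ℝ))
      refine this.congr_deriv ?_
      have hk : (1 / (n:ℝ)) * (n:ℝ) ^ 2 = n := by field_simp
      linear_combination (-Real.sin ((n : ℝ) ^ 2 * x 0)) * hk
    have h2 := (hcos.comp_hasFDerivAt x h0).add h1
    refine h2.congr_fderiv ?_
    refine ContinuousLinearMap.ext fun w => ?_
    simp [gvec, PiLp.inner_apply, Fin.sum_univ_two,
      PiLp.proj_apply, PiLp.continuousLinearEquiv_symm_apply]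
    ring
  · -- (a)
    intro i j
    fin_cases i <;> fin_cases j
    · simpa [gvec, μ, Afn] using mu_int_00 n hn
    · simpa [gvec, μ, Afn] using mu_int_01 n hn
    · simpa [gvec, μ, Afn] using mu_int_01 n hn
    · simpa [gvec, μ, Afn, Matrix.vecHead, Matrix.vecTail] using mu_int_11
  · -- (b)
    ext i j
    fin_cases i <;> fin_cases j <;> simp [Af, vecMulVec]
  · -- (c)
    have h1 : frobNorm Af = 1 := by
      simp [Af, frobNorm, Fin.sum_univ_two]
    have h2 : frobNorm Afn = Real.sqrt ((n : ℝ) ^ 4 / 4 + 1) := by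
      simp [Afn, frobNorm, Fin.sum_univ_two]
      ring_nf
    have h3 : Matrix.trace (Afᵀ * Afn) = 1 := by
      simp [Af, Afn, Matrix.trace_fin_two, Matrix.mul_apply, Fin.sum_univ_two,
        Matrix.vecHead, Matrix.vecTail]
    rw [h1, h2, h3, one_mul]
  · -- limit
    simp_rw [one_div]
    apply Filter.Tendsto.inv_tendsto_atTop
    have hs : Filter.Tendsto Real.sqrt atTop atTop := by
      apply Filter.tendsto_atTop_atTop.mpr
      intro b
      refine ⟨b ^ 2, fun a ha => ?_⟩
      calc b ≤ |b| := le_abs_self b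
        _ = Real.sqrt (b ^ 2) := (Real.sqrt_sq_eq_abs b).symm
        _ ≤ Real.sqrt a := Real.sqrt_le_sqrt ha
    apply hs.comp
    apply Filter.tendsto_atTop_add_const_right
    apply Filter.Tendsto.atTop_div_const (by norm_num : (0:ℝ) < 4)
    exact (tendsto_pow_atTop (by norm_num)).comp tendsto_natCast_atTop_atTop
  · -- (d)
    intro x
    have : f x - fn x = -((1 / (n : ℝ)) * Real.cos ((n : ℝ) ^ 2 * x 0)) := by
      simp only [f, fn]; ring
    rw [this, abs_neg, abs_mul, abs_of_pos (by positivity : (0:ℝ) < 1 / (n:ℝ))]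
    calc 1 / (n:ℝ) * |Real.cos ((n : ℝ) ^ 2 * x 0)| ≤ 1 / (n:ℝ) * 1 :=
        mul_le_mul_of_nonneg_left (Real.abs_cos_le_one _) (by positivity)
      _ = 1 / (n:ℝ) := mul_one _
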